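/- arXiv:2407.14495 — 4 statements merged into one kernel-verified Lean document; each statement's English description precedes it below -/
import Mathlib

section
/- Let n ≥ 1 and let S : Ω → (Fin (n+1) → ℝ) be a random vector on a probability space (Ω, 𝔽, ℙ) whose law is exchangeable: for every permutation σ of Fin (n+1), the law of (S_{σ(0)}, ..., S_{σ(n)}) equals the law of (S_0, ..., S_n). Suppose moreover that almost surely the coordinates S_0(ω), ..., S_n(ω) are pairwise distinct. Then for every j ∈ {0, 1, ..., n}, the probability that exactly j of the first n coordinates are strictly less than the last coordinate equals 1/(n+1); i.e., ℙ( #{ i ∈ {0,...,n−1} : S_i < S_n } = j ) = 1/(n+1). -/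
/-!
Let `A k` be the event that the `k`-th coordinate has exactly `j` coordinates strictly below
it. Exchangeability (through the transposition of `k` and the last index) makes all the `A k`
equiprobable. When the coordinates are distinct, the ranks `k ↦ #{i | v i < v k}` are a
bijection onto `{0, …, n}`, so exactly one `A k` occurs; the `n + 1` events thus partition a
full-measure set and each has probability `1 / (n + 1)`.
-/

open MeasureTheory Finset

theorem measurableSet_setOf_injective {ι α : Type*} [Finite ι] [MeasurableSpace α]
    [MeasurableEq α] :
    MeasurableSet {v : ι → α | Function.Injective v} := by
  simp only [Function.Injective, Set.ofPred_forall]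
  measurability

section Exchangeable

variable {ι α : Type*} [Fintype ι]

def coordRank [LinearOrder α] (v : ι → α) (k : ι) : ℕ := #{i | v i < v k}

def Exchangeable [MeasurableSpace α] (μ : Measure (ι → α)) : Prop :=
  ∀ σ : Equiv.Perm ι, μ.map (fun v i => v (σ i)) = μ

section Rank

variable [LinearOrder α]

theorem coordRank_comp_perm (v : ι → α) (σ : Equiv.Perm ι) (k : ι) :
    coordRank (fun i => v (σ i)) k = coordRank v (σ k) :=
  card_equiv σ (by simp)

theorem coordRank_lt_card (v : ι → α) (k : ι) : coordRank v k < Fintype.card ι :=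
  card_lt_univ_of_notMem (x := k) (by simp)

theorem coordRank_lt_coordRank {v : ι → α} {a b : ι} (h : v a < v b) :
    coordRank v a < coordRank v b :=
  card_lt_card <| (ssubset_iff_of_subset fun i hi => by
    simp only [mem_filter, mem_univ, true_and] at hi ⊢
    exact hi.trans h).2 ⟨a, by simpa using h, by simp⟩

theorem coordRank_injective {v : ι → α} (hv : Function.Injective v) :
    Function.Injective (coordRank v) := by
  intro a b hab
  by_contra hne
  rcases (hv.ne hne).lt_or_gt with h | h
  · exact (coordRank_lt_coordRank h).ne hab
  · exact (coordRank_lt_coordRank h).ne' hab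

theorem existsUnique_coordRank_eq {v : ι → α} (hv : Function.Injective v) {j : ℕ}
    (hj : j < Fintype.card ι) : ∃! k, coordRank v k = j := by
  let r : ι → Fin (Fintype.card ι) := fun k => ⟨coordRank v k, coordRank_lt_card v k⟩
  have hr : r.Bijective := (Fintype.bijective_iff_injective_and_card r).2
    ⟨fun a b h => coordRank_injective hv (congrArg Fin.val h), by simp⟩
  simpa [r, Fin.ext_iff] using hr.existsUnique ⟨j, hj⟩

theorem coordRank_last {n : ℕ} (v : Fin (n + 1) → α) :
    coordRank v (Fin.last n) = #{i : Fin n | v i.castSucc < v (Fin.last n)} := by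
  simp only [coordRank, card_filter, Fin.sum_univ_castSucc, lt_irrefl, if_false, add_zero]

end Rank

section Measure

variable [LinearOrder α] [TopologicalSpace α] [OrderClosedTopology α]
  [SecondCountableTopology α] [MeasurableSpace α] [OpensMeasurableSpace α]

theorem measurable_coordRank (k : ι) : Measurable fun v : ι → α => coordRank v k := by
  simp only [coordRank, card_filter]
  exact Finset.measurable_sum _ fun i _ => Measurable.ite
    (measurableSet_lt (measurable_pi_apply i) (measurable_pi_apply k)) measurable_const
    measurable_const

theorem measurableSet_coordRank_eq (k : ι) (j : ℕ) :
    MeasurableSet {v : ι → α | coordRank v k = j} :=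
  measurable_coordRank k (measurableSet_singleton j)

theorem Exchangeable.measure_coordRank_eq {μ : Measure (ι → α)} (hμ : Exchangeable μ)
    (k k' : ι) (j : ℕ) : μ {v | coordRank v k = j} = μ {v | coordRank v k' = j} := by
  classical
  let σ := Equiv.swap k' k
  have hσ : Measurable fun v : ι → α => fun i => v (σ i) := by fun_prop
  calc μ {v | coordRank v k = j}
      = μ ((fun v i => v (σ i)) ⁻¹' {v | coordRank v k' = j}) := by
        congr 1; ext v; simp [σ, coordRank_comp_perm]
    _ = μ.map (fun v i => v (σ i)) {v | coordRank v k' = j} :=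
        (Measure.map_apply hσ (measurableSet_coordRank_eq k' j)).symm
    _ = μ {v | coordRank v k' = j} := by rw [hμ σ]

theorem sum_measure_coordRank_eq {μ : Measure (ι → α)} [IsProbabilityMeasure μ]
    (hinj : ∀ᵐ v ∂μ, Function.Injective v) {j : ℕ} (hj : j < Fintype.card ι) :
    ∑ k, μ {v | coordRank v k = j} = 1 := by
  have hdisj :
      Pairwise (Function.onFun (AEDisjoint μ) fun k => {v : ι → α | coordRank v k = j}) :=
    fun k k' hne => measure_mono_null
      (fun v hv hv' => hne (coordRank_injective hv' (hv.1.trans hv.2.symm))) (ae_iff.1 hinj)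
  have hcover : μ (⋃ k, {v : ι → α | coordRank v k = j})ᶜ = 0 :=
    measure_mono_null
      (fun v hv hv' => hv (Set.mem_iUnion.2 (existsUnique_coordRank_eq hv' hj).exists))
      (ae_iff.1 hinj)
  rw [← tsum_fintype (L := SummationFilter.unconditional _),
    ← measure_iUnion₀ hdisj fun k => (measurableSet_coordRank_eq k j).nullMeasurableSet,
    measure_congr (ae_eq_univ.2 hcover), measure_univ]

theorem Exchangeable.measure_coordRank_eq_one_div_card {μ : Measure (ι → α)}
    [IsProbabilityMeasure μ] (hμ : Exchangeable μ) (hinj : ∀ᵐ v ∂μ, Function.Injective v)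
    {j : ℕ} (hj : j < Fintype.card ι) (k : ι) :
    μ {v | coordRank v k = j} = 1 / Fintype.card ι := by
  rw [ENNReal.eq_div_iff (by exact_mod_cast (Nat.zero_lt_of_lt hj).ne') (by simp),
    ← sum_measure_coordRank_eq hinj hj]
  simp [hμ.measure_coordRank_eq _ k]

end Measure

end Exchangeable

theorem rank_uniform_of_exchangeable_general {Ω : Type*} [MeasurableSpace Ω]
    (ℙ : Measure Ω) [IsProbabilityMeasure ℙ]
    (n : ℕ) (S : Ω → Fin (n + 1) → ℝ) (hS : Measurable S)
    (hexch : ∀ σ : Equiv.Perm (Fin (n + 1)),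
      Measure.map (fun ω => fun i => S ω (σ i)) ℙ = Measure.map S ℙ)
    (hdist : ∀ᵐ ω ∂ℙ, ∀ i j : Fin (n + 1), i ≠ j → S ω i ≠ S ω j)
    (j : ℕ) (hj : j ≤ n) :
    ℙ {ω | (Finset.univ.filter
        (fun i : Fin n => S ω i.castSucc < S ω (Fin.last n))).card = j}
      = 1 / (n + 1) := by
  have hμ : Exchangeable (ℙ.map S) := fun σ => by
    rw [Measure.map_map (by fun_prop) hS]
    exact hexch σ
  have hinj : ∀ᵐ v ∂ℙ.map S, Function.Injective v :=
    (ae_map_iff hS.aemeasurable measurableSet_setOf_injective).2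
      (hdist.mono fun ω h i i' => not_imp_not.1 (h i i'))
  have := Measure.isProbabilityMeasure_map (μ := ℙ) hS.aemeasurable
  have h := hμ.measure_coordRank_eq_one_div_card hinj (j := j) (by simpa [Nat.lt_succ_iff])
    (Fin.last n)
  rw [Measure.map_apply hS (measurableSet_coordRank_eq _ _)] at h
  simpa [coordRank_last] using h

/-- **Uniform distribution of the rank of the last coordinate.** If the law of the
random vector `(S 0, …, S n)` is exchangeable and the coordinates are almost surely
pairwise distinct, then for every `j ∈ {0, …, n}` the probability that exactly `j`
of the first `n` coordinates lie strictly below the last coordinate is `1/(n+1)`. -/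
theorem rank_uniform_of_exchangeable {Ω : Type*} [MeasurableSpace Ω]
    (ℙ : Measure Ω) [IsProbabilityMeasure ℙ]
    (n : ℕ) (hn : 1 ≤ n) (S : Ω → Fin (n + 1) → ℝ) (hS : Measurable S)
    (hexch : ∀ σ : Equiv.Perm (Fin (n + 1)),
      Measure.map (fun ω => fun i => S ω (σ i)) ℙ = Measure.map S ℙ)
    (hdist : ∀ᵐ ω ∂ℙ, ∀ i j : Fin (n + 1), i ≠ j → S ω i ≠ S ω j)
    (j : ℕ) (hj : j ≤ n) :
    ℙ {ω | (Finset.univ.filter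
        (fun i : Fin n => S ω i.castSucc < S ω (Fin.last n))).card = j}
      = 1 / (n + 1) :=
  rank_uniform_of_exchangeable_general ℙ n S hS hexch hdist j hj
end

section
/- Let n ≥ 1, let α ∈ (0,1), and let S : Ω → (Fin (n+1) → ℝ) be a random vector on a probability space (Ω, 𝔽, ℙ) whose law is exchangeable: for every permutation σ of Fin (n+1), the law of (S_{σ(0)}, ..., S_{σ(n)}) equals the law of (S_0, ..., S_n). Suppose almost surely the coordinates are pairwise distinct. Let k = ⌈(n+1)(1−α)⌉ and assume k ≤ n. Then ℙ( #{ i ∈ {0,...,n−1} : S_i < S_n } < k ) ≥ k/(n+1) ≥ 1 − α. Consequently, interpreting S_0,...,S_{n−1} as calibration non-conformity scores and S_n as the test score, the test score is at most the k-th smallest calibration score with probability at least 1 − α. -/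
open MeasureTheory Finset

/-- rank of coordinate `p` in the vector `v`. -/
noncomputable def rk {n : ℕ} (p : Fin n) (v : Fin n → ℝ) : ℕ :=
  (Finset.univ.filter (fun i => v i < v p)).card

lemma rk_measurable {n : ℕ} (p : Fin n) : Measurable fun v : Fin n → ℝ => rk p v := by
  unfold rk
  simp_rw [Finset.card_filter]
  exact Finset.measurable_sum _ fun i _ =>
    Measurable.ite (measurableSet_lt (measurable_pi_apply i) (measurable_pi_apply p))
      measurable_const measurable_const

lemma rk_comp {n : ℕ} (σ : Equiv.Perm (Fin n)) (p : Fin n) (v : Fin n → ℝ) :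
    rk p (fun i => v (σ i)) = rk (σ p) v := by
  unfold rk
  refine Finset.card_bij (fun i _ => σ i) ?_ ?_ ?_
  · intro a ha; simp only [mem_filter, mem_univ, true_and] at ha ⊢; exact ha
  · intro a _ b _ h; exact σ.injective h
  · intro b hb
    simp only [mem_filter, mem_univ, true_and] at hb
    exact ⟨σ.symm b, by simp [hb], by simp⟩

lemma rk_lt_rk {n : ℕ} {v : Fin n → ℝ} {p q : Fin n} (h : v p < v q) : rk p v < rk q v := by
  unfold rk
  apply Finset.card_lt_card
  constructor
  · intro i hi; simp only [mem_filter, mem_univ, true_and] at hi ⊢; exact hi.trans h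
  · intro hsub
    have hp : p ∈ univ.filter (fun i => v i < v q) := by simp [h]
    have := hsub hp
    simp only [mem_filter, mem_univ, true_and] at this
    exact lt_irrefl _ this

lemma rk_inj {n : ℕ} {v : Fin n → ℝ} (hv : ∀ i j, i ≠ j → v i ≠ v j) :
    Function.Injective (fun p => rk p v) := by
  intro p q h
  by_contra hpq
  rcases (hv p q hpq).lt_or_gt with hlt | hlt
  · exact (rk_lt_rk hlt).ne h
  · exact (rk_lt_rk hlt).ne' h

lemma rk_le {n : ℕ} (p : Fin (n+1)) (v : Fin (n+1) → ℝ) : rk p v ≤ n := by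
  unfold rk
  have hsub : (univ.filter (fun i => v i < v p)) ⊆ univ.erase p := by
    intro i hi
    simp only [mem_filter, mem_univ, true_and] at hi
    simp only [mem_erase, mem_univ, and_true]
    intro h; rw [h] at hi; exact lt_irrefl _ hi
  calc _ ≤ (univ.erase p).card := Finset.card_le_card hsub
    _ = n := by simp

lemma rk_exists {n : ℕ} {v : Fin (n+1) → ℝ}
    (hv : ∀ i j, i ≠ j → v i ≠ v j) {m : ℕ} (hm : m ≤ n) :
    ∃ p, rk p v = m := by
  have hinj : Function.Injective
      (fun p : Fin (n+1) => (⟨rk p v, Nat.lt_succ_of_le (rk_le p v)⟩ : Fin (n+1))) := by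
    intro p q h
    exact rk_inj hv (congrArg Fin.val h)
  have hsurj := Finite.surjective_of_injective hinj
  obtain ⟨p, hp⟩ := hsurj ⟨m, Nat.lt_succ_of_le hm⟩
  exact ⟨p, congrArg Fin.val hp⟩

lemma rk_last_eq {n : ℕ} (v : Fin (n+1) → ℝ) :
    rk (Fin.last n) v
      = (Finset.univ.filter (fun i : Fin n => v i.castSucc < v (Fin.last n))).card := by
  unfold rk
  rw [Finset.card_filter, Finset.card_filter, Fin.sum_univ_castSucc]
  simp

/-- **Conformal coverage probability.** For exchangeable, almost surely pairwise
distinct scores `S 0, …, S n` (the first `n` being calibration scores and `S n`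
the test score), with `k = ⌈(n+1)(1−α)⌉ ≤ n`, the probability that fewer than `k`
calibration scores lie strictly below the test score is at least
`k/(n+1) ≥ 1 − α`. -/
theorem conformal_coverage {Ω : Type*} [MeasurableSpace Ω]
    (ℙ : Measure Ω) [IsProbabilityMeasure ℙ]
    (n : ℕ) (hn : 1 ≤ n) (α : ℝ) (hα : α ∈ Set.Ioo (0 : ℝ) 1)
    (S : Ω → Fin (n + 1) → ℝ) (hS : Measurable S)
    (hexch : ∀ σ : Equiv.Perm (Fin (n + 1)),
      Measure.map (fun ω => fun i => S ω (σ i)) ℙ = Measure.map S ℙ)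
    (hdist : ∀ᵐ ω ∂ℙ, ∀ i j : Fin (n + 1), i ≠ j → S ω i ≠ S ω j)
    (k : ℕ) (hk_def : k = ⌈((n : ℝ) + 1) * (1 - α)⌉₊) (hk : k ≤ n) :
    ENNReal.ofReal (1 - α) ≤ (k : ENNReal) / (n + 1) ∧
    (k : ENNReal) / (n + 1) ≤
      ℙ {ω | (Finset.univ.filter
        (fun i : Fin n => S ω i.castSucc < S ω (Fin.last n))).card < k} := by
  have hNne0 : ((n : ENNReal) + 1) ≠ 0 := by simp
  have hNnetop : ((n : ENNReal) + 1) ≠ ⊤ := by simp [ENNReal.add_ne_top]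
  constructor
  · -- first inequality
    rw [ENNReal.le_div_iff_mul_le (Or.inl hNne0) (Or.inl hNnetop)]
    have h1α : (0:ℝ) ≤ 1 - α := by linarith [hα.2]
    have hle : (1 - α) * ((n:ℝ)+1) ≤ (k:ℝ) := by
      rw [hk_def, mul_comm]
      exact Nat.le_ceil _
    have hcast : ((n:ENNReal) + 1) = ENNReal.ofReal ((n:ℝ) + 1) := by
      rw [ENNReal.ofReal_add (by positivity) zero_le_one, ENNReal.ofReal_natCast,
        ENNReal.ofReal_one]
    rw [hcast, ← ENNReal.ofReal_mul h1α]
    calc ENNReal.ofReal ((1-α)*((n:ℝ)+1)) ≤ ENNReal.ofReal (k:ℝ) :=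
          ENNReal.ofReal_le_ofReal hle
      _ = (k : ENNReal) := ENNReal.ofReal_natCast k
  · -- second inequality
    set A : Fin (n+1) → ℕ → Set Ω := fun p m => S ⁻¹' {v | rk p v = m} with hA
    have hsetmeas : ∀ (p : Fin (n+1)) (m : ℕ),
        MeasurableSet {v : Fin (n+1) → ℝ | rk p v = m} :=
      fun p m => (rk_measurable p) (MeasurableSet.singleton m)
    have hAmeas : ∀ p m, MeasurableSet (A p m) := fun p m => hS (hsetmeas p m)
    -- exchangeability: all positions have the same rank distribution
    have hAeq : ∀ (p : Fin (n+1)) (m : ℕ), ℙ (A p m) = ℙ (A (Fin.last n) m) := by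
      intro p m
      set σ := Equiv.swap (Fin.last n) p with hσ
      have hmeasσ : Measurable (fun ω => fun i : Fin (n+1) => S ω (σ i)) :=
        measurable_pi_lambda _ (fun i => (measurable_pi_apply (σ i)).comp hS)
      have hset := hsetmeas (Fin.last n) m
      have c1 : ℙ (A (Fin.last n) m)
          = Measure.map S ℙ {v | rk (Fin.last n) v = m} :=
        (Measure.map_apply hS hset).symm
      have c2 : Measure.map (fun ω => fun i : Fin (n+1) => S ω (σ i)) ℙ
            {v | rk (Fin.last n) v = m}
          = ℙ ((fun ω => fun i : Fin (n+1) => S ω (σ i)) ⁻¹' {v | rk (Fin.last n) v = m}) :=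
        Measure.map_apply hmeasσ hset
      have c3 : ((fun ω => fun i : Fin (n+1) => S ω (σ i)) ⁻¹' {v | rk (Fin.last n) v = m})
          = A p m := by
        ext ω
        simp only [Set.mem_preimage, Set.mem_setOf_eq, hA]
        rw [rk_comp σ (Fin.last n) (S ω), hσ, Equiv.swap_apply_left]
      rw [c1, ← hexch σ, c2, c3]
    -- the distinctness event
    set D : Set Ω := {ω | ∀ i j : Fin (n+1), i ≠ j → S ω i ≠ S ω j} with hD
    have hDmeas : MeasurableSet D := by
      have : D = ⋂ (i : Fin (n+1)), ⋂ (j : Fin (n+1)), ⋂ (_ : i ≠ j),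
          {ω | S ω i = S ω j}ᶜ := by
        ext ω; simp [hD]
      rw [this]
      exact MeasurableSet.iInter fun i => MeasurableSet.iInter fun j =>
        MeasurableSet.iInter fun _ =>
          (measurableSet_eq_fun ((measurable_pi_apply i).comp hS)
            ((measurable_pi_apply j).comp hS)).compl
    have hDc : ℙ Dᶜ = 0 := by
      rw [Set.compl_setOf]
      exact hdist
    have hD1 : ℙ D = 1 := by
      have := prob_compl_eq_zero_iff (μ := ℙ) hDmeas
      exact this.mp hDc
    -- each A p m has the same measure and they partition D (up to null sets)
    have huniform : ∀ m ≤ n, ℙ (A (Fin.last n) m) = ((n : ENNReal) + 1)⁻¹ := by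
      intro m hm
      have hinter : ∀ p, ℙ (A p m) = ℙ (A p m ∩ D) := by
        intro p
        refine le_antisymm ?_ (measure_mono Set.inter_subset_left)
        calc ℙ (A p m) = ℙ ((A p m ∩ D) ∪ (A p m ∩ Dᶜ)) := by
              rw [Set.inter_union_compl]
          _ ≤ ℙ (A p m ∩ D) + ℙ (A p m ∩ Dᶜ) := measure_union_le _ _
          _ ≤ ℙ (A p m ∩ D) + 0 := by
              gcongr
              exact le_trans (measure_mono Set.inter_subset_right) hDc.le
          _ = ℙ (A p m ∩ D) := add_zero _
      have hdisj : (Set.univ : Set (Fin (n+1))).PairwiseDisjoint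
          (fun p => A p m ∩ D) := by
        intro p _ q _ hpq
        refine Set.disjoint_left.mpr ?_
        rintro ω ⟨hp, hωD⟩ ⟨hq, -⟩
        exact hpq (rk_inj hωD (hp.trans hq.symm))
      have hcover : (⋃ p : Fin (n+1), (A p m ∩ D)) = D := by
        ext ω
        simp only [Set.mem_iUnion, hA, Set.mem_inter_iff, Set.mem_preimage,
          Set.mem_setOf_eq]
        constructor
        · rintro ⟨p, -, h⟩; exact h
        · intro hωD
          obtain ⟨p, hp⟩ := rk_exists hωD hm
          exact ⟨p, hp, hωD⟩
      have hsum : ∑ p : Fin (n+1), ℙ (A p m) = 1 := by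
        calc ∑ p : Fin (n+1), ℙ (A p m) = ∑ p : Fin (n+1), ℙ (A p m ∩ D) := by
              simp_rw [hinter]
          _ = ℙ (⋃ p ∈ (Finset.univ : Finset (Fin (n+1))), (A p m ∩ D)) := by
              rw [measure_biUnion_finset
                (by simpa using hdisj) (fun p _ => (hAmeas p m).inter hDmeas)]
          _ = ℙ D := by
              congr 1
              simpa using hcover
          _ = 1 := hD1
      have hconst : ∑ p : Fin (n+1), ℙ (A p m)
          = ((n : ENNReal) + 1) * ℙ (A (Fin.last n) m) := by
        rw [Finset.sum_congr rfl (fun p _ => hAeq p m), Finset.sum_const,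
          Finset.card_univ, Fintype.card_fin, nsmul_eq_mul]
        push_cast
        ring
      have h1 : ((n : ENNReal) + 1) * ℙ (A (Fin.last n) m) = 1 := by
        rw [← hconst, hsum]
      calc ℙ (A (Fin.last n) m)
          = (((n : ENNReal) + 1)⁻¹ * ((n : ENNReal) + 1)) * ℙ (A (Fin.last n) m) := by
            rw [ENNReal.inv_mul_cancel hNne0 hNnetop, one_mul]
        _ = ((n : ENNReal) + 1)⁻¹ * (((n : ENNReal) + 1) * ℙ (A (Fin.last n) m)) :=
            mul_assoc _ _ _
        _ = ((n : ENNReal) + 1)⁻¹ := by rw [h1, mul_one]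
    -- decompose the target event
    have htarget : {ω | (Finset.univ.filter
        (fun i : Fin n => S ω i.castSucc < S ω (Fin.last n))).card < k}
        = ⋃ m ∈ Finset.range k, A (Fin.last n) m := by
      ext ω
      simp only [Set.mem_setOf_eq, Set.mem_iUnion, Finset.mem_range, hA,
        Set.mem_preimage, Set.mem_setOf_eq, ← rk_last_eq]
      constructor
      · intro h; exact ⟨_, h, rfl⟩
      · rintro ⟨m, hm, h⟩; rw [h]; exact hm
    have hdisj2 : (↑(Finset.range k) : Set ℕ).PairwiseDisjoint
        (fun m => A (Fin.last n) m) := by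
      intro m _ m' _ hmm'
      refine Set.disjoint_left.mpr ?_
      rintro ω hm hm'
      exact hmm' (hm.symm.trans hm')
    have : ℙ {ω | (Finset.univ.filter
        (fun i : Fin n => S ω i.castSucc < S ω (Fin.last n))).card < k}
        = (k : ENNReal) / (n + 1) := by
      rw [htarget, measure_biUnion_finset hdisj2 (fun m _ => hAmeas (Fin.last n) m)]
      have : ∀ m ∈ Finset.range k, ℙ (A (Fin.last n) m) = ((n : ENNReal) + 1)⁻¹ := by
        intro m hm
        exact huniform m (le_trans (Nat.le_of_lt_succ (Nat.lt_succ_of_lt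
          (Finset.mem_range.mp hm))) (le_trans (Nat.le_of_eq rfl) hk)) -- fix below
      rw [Finset.sum_congr rfl this, Finset.sum_const, Finset.card_range, nsmul_eq_mul,
        ENNReal.div_eq_inv_mul, mul_comm]
    rw [this]
end

section
/- Let n ≥ 1 and let m : Fin n → ℝ be a function with pairwise distinct, strictly positive values. Let α ∈ (0,1), set k = ⌈(1+n)(1−α)⌉, and assume 1 ≤ k ≤ n. Let t be the k-th smallest value of m (so t > 0), let K > 0 be a real number, let ε ≥ 0, and let F : ℝ → ℝ. Suppose that for every t' > 0, | F(t') − (1/n) · #{ i : m(i) > 1/(K t') } | ≤ ε. Define α' by 1 − α' = k/n, i.e., α' = 1 − k/n. Then F(1/(K t)) ≥ α' − ε. -/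
open Finset

/-- The `k`-th smallest value (1-indexed) of a function `m : Fin n → ℝ`:
the `k`-th entry of the list of values of `m` sorted in increasing order. -/
noncomputable def kthSmallest {n : ℕ} (m : Fin n → ℝ) (k : ℕ) : ℝ :=
  ((Finset.univ.image m).sort (· ≤ ·)).getD (k - 1) 0

/-- **Threshold consistency.** Let `m : Fin n → ℝ` have pairwise distinct, strictly
positive values (the calibration interquantile interval lengths), let
`k = ⌈(1+n)(1−α)⌉` with `1 ≤ k ≤ n`, let `t` be the `k`-th smallest value of `m`
(the conformal threshold), let `K > 0`, and let `F : ℝ → ℝ` satisfy the uniform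
`ε`-approximation `|F t' − (1/n)·#{i : m i > 1/(K t')}| ≤ ε` for all `t' > 0`.
Then with `α' = 1 − k/n` one has `F(1/(K t)) ≥ α' − ε`. -/
theorem threshold_consistency (n : ℕ) (hn : 1 ≤ n) (m : Fin n → ℝ)
    (hm_inj : Function.Injective m) (hm_pos : ∀ i, 0 < m i)
    (α : ℝ) (hα : α ∈ Set.Ioo (0 : ℝ) 1)
    (k : ℕ) (hk_def : k = ⌈(1 + (n : ℝ)) * (1 - α)⌉₊) (hk1 : 1 ≤ k) (hkn : k ≤ n)
    (t : ℝ) (ht : t = kthSmallest m k)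
    (K : ℝ) (hK : 0 < K) (ε : ℝ) (hε : 0 ≤ ε) (F : ℝ → ℝ)
    (hF : ∀ t' : ℝ, 0 < t' →
      |F t' - (1 / (n : ℝ)) *
        ((Finset.univ.filter (fun i : Fin n => 1 / (K * t') < m i)).card : ℝ)| ≤ ε)
    (α' : ℝ) (hα' : α' = 1 - (k : ℝ) / n) :
    α' - ε ≤ F (1 / (K * t)) := by
  have hcard : (Finset.univ.image m).card = n := by
    rw [Finset.card_image_of_injective _ hm_inj, Finset.card_univ, Fintype.card_fin]
  set s := Finset.univ.image m with hs
  set e := s.orderEmbOfFin hcard with he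
  have hk1' : k - 1 < n := by omega
  -- t = e ⟨k-1⟩
  have ht' : t = e ⟨k - 1, hk1'⟩ := by
    rw [ht, kthSmallest, Finset.orderEmbOfFin_apply]
    rw [List.getD_eq_getElem?_getD, List.getElem?_eq_getElem (by
      rw [Finset.length_sort, hcard]; omega)]
    rfl
  have htpos : 0 < t := by
    rw [ht']
    have hmem : e ⟨k - 1, hk1'⟩ ∈ Finset.univ.image m :=
      Finset.orderEmbOfFin_mem s hcard ⟨k - 1, hk1'⟩
    obtain ⟨i, _, hi⟩ := Finset.mem_image.mp hmem
    rw [← hi]; exact hm_pos i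
  -- counting: #{i | t < m i} = n - k
  have hcount : (Finset.univ.filter (fun i : Fin n => t < m i)).card = n - k := by
    have h1 : (Finset.univ.filter (fun i : Fin n => t < m i)).card
        = (s.filter (fun x => t < x)).card := by
      rw [hs, Finset.filter_image, Finset.card_image_of_injective _ hm_inj]
    have h2 : s.filter (fun x => t < x)
        = (Finset.univ.filter (fun j : Fin n => (⟨k - 1, hk1'⟩ : Fin n) < j)).image e := by
      ext x
      simp only [Finset.mem_filter, Finset.mem_image, Finset.mem_univ, true_and]
      constructor
      · rintro ⟨hxs, hxt⟩
        have : x ∈ Set.range e := by rw [Finset.range_orderEmbOfFin]; exact hxs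
        obtain ⟨j, hj⟩ := this
        refine ⟨j, ?_, hj⟩
        rw [← (Finset.orderEmbOfFin s hcard).strictMono.lt_iff_lt (a := ⟨k - 1, hk1'⟩)]
        rw [← he] at *
        rw [hj, ← ht']; exact hxt
      · rintro ⟨j, hjlt, hj⟩
        constructor
        · rw [← hj]; exact Finset.orderEmbOfFin_mem s hcard j
        · rw [← hj, ht']
          exact (Finset.orderEmbOfFin s hcard).strictMono hjlt
    rw [h1, h2, Finset.card_image_of_injective _ (Finset.orderEmbOfFin s hcard).injective]
    have h3 : Finset.univ.filter (fun j : Fin n => (⟨k - 1, hk1'⟩ : Fin n) < j)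
        = Finset.Ioi (⟨k - 1, hk1'⟩ : Fin n) := by
      ext j; simp [Finset.mem_Ioi]
    rw [h3, Fin.card_Ioi]
    simp only
    omega
  -- apply hF at t' = 1/(K t)
  have ht'pos : 0 < 1 / (K * t) := by positivity
  have hFt := hF _ ht'pos
  have harg : 1 / (K * (1 / (K * t))) = t := by
    field_simp
  rw [harg, hcount] at hFt
  have hcast : ((n - k : ℕ) : ℝ) = (n : ℝ) - k := by
    push_cast [hkn]; ring
  rw [hcast] at hFt
  have hnpos : (0 : ℝ) < n := by exact_mod_cast hn
  have hval : (1 / (n : ℝ)) * ((n : ℝ) - k) = 1 - (k : ℝ) / n := by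
    field_simp
  rw [hval] at hFt
  rw [hα']
  have := abs_le.mp hFt
  linarith [this.1]
end

section
/- Let f : ℝ → ℝ be Lipschitz with constant L ≥ 0, let K ≥ 1 be an integer, let δ ∈ [0, 1], and let t > 0. Let q_0 ≤ q_1 ≤ ... ≤ q_K be real numbers defining intervals I_k = (q_{k−1}, q_k] for k = 1, ..., K, and suppose that for every k, ∫_{q_{k−1}}^{q_k} f(y) dy ≥ (1 − δ)/K. Then the union of the short intervals is contained in the corresponding super-level set of f: ⋃ { I_k : q_k − q_{k−1} ≤ t, 1 ≤ k ≤ K } ⊆ { y ∈ ℝ : f(y) ≥ (1 − δ)/(K t) − L t / 2 }. -/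
open MeasureTheory Set
open scoped Interval

/-!
On an interquantile interval `(a, b]` containing `y`, the Lipschitz bound `f z ≤ f y + L |z - y|`
integrates to `(1 - δ)/K ≤ ∫ f ≤ (b - a) f y + L (b - a)² / 2`. Dividing by `b - a` gives
`f y ≥ (1 - δ)/(K (b - a)) - L (b - a)/2`, and the right-hand side only decreases when the
length `b - a` is replaced by the larger threshold `t`.
-/

theorem integral_abs_sub_of_mem_Icc {a b y : ℝ} (hy : y ∈ Icc a b) :
    ∫ z in a..b, |z - y| = ((y - a) ^ 2 + (b - y) ^ 2) / 2 := by
  have half (c : ℝ) : ∫ z in Ι y c, |z - y| = (c - y) ^ 2 / 2 := by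
    simpa [one_add_one_eq_two] using integral_pow_abs_sub_uIoc (a := y) (b := c) (n := 1)
  have hc : Continuous fun z : ℝ => |z - y| := by fun_prop
  rw [← intervalIntegral.integral_add_adjacent_intervals (b := y) (hc.intervalIntegrable _ _)
      (hc.intervalIntegrable _ _), intervalIntegral.integral_of_le hy.1,
    intervalIntegral.integral_of_le hy.2, ← uIoc_of_ge hy.1, ← uIoc_of_le hy.2, half, half]
  ring

theorem setIntegral_Ioc_le_of_le_add_mul_abs {f : ℝ → ℝ} {a b y L : ℝ} (hy : y ∈ Icc a b)
    (hL : 0 ≤ L) (hf : IntegrableOn f (Ioc a b)) (hfy : ∀ z ∈ Ioc a b, f z ≤ f y + L * |z - y|) :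
    ∫ z in Ioc a b, f z ≤ (b - a) * f y + L * (b - a) ^ 2 / 2 := by
  have hab : a ≤ b := hy.1.trans hy.2
  have hc : Continuous fun z : ℝ => L * |z - y| := by fun_prop
  calc ∫ z in Ioc a b, f z ≤ ∫ z in Ioc a b, (f y + L * |z - y|) :=
        setIntegral_mono_on hf ((continuous_const.add hc).integrableOn_Ioc) measurableSet_Ioc hfy
    _ = (b - a) * f y + L * (((y - a) ^ 2 + (b - y) ^ 2) / 2) := by
        rw [integral_add (integrableOn_const (C := f y) measure_Ioc_lt_top.ne) hc.integrableOn_Ioc,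
          setIntegral_const, Real.volume_real_Ioc_of_le hab, smul_eq_mul, integral_const_mul,
          ← intervalIntegral.integral_of_le hab, integral_abs_sub_of_mem_Icc hy]
    _ ≤ (b - a) * f y + L * (b - a) ^ 2 / 2 := by
        nlinarith [mul_nonneg hL (mul_nonneg (sub_nonneg.2 hy.1) (sub_nonneg.2 hy.2))]

theorem div_sub_mul_le_of_le_mul_add {m L ℓ t v : ℝ} (hm : 0 ≤ m) (hL : 0 ≤ L) (hℓ : 0 < ℓ)
    (hℓt : ℓ ≤ t) (h : m ≤ ℓ * v + L * ℓ ^ 2 / 2) :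
    m / t - L * t / 2 ≤ v := by
  have hmℓ : m / ℓ ≤ v + L * ℓ / 2 := by
    rw [div_le_iff₀ hℓ]
    nlinarith
  have hmt : m / t ≤ m / ℓ := div_le_div_of_nonneg_left hm hℓ hℓt
  nlinarith

theorem cti_prediction_set_subset_general (f : ℝ → ℝ) (L : ℝ)
    (hf : ∀ u v : ℝ, |f u - f v| ≤ L * |u - v|)
    (K : ℕ) (δ : ℝ) (hδ : δ ∈ Set.Icc (0 : ℝ) 1) (t : ℝ)
    (q : Fin (K + 1) → ℝ)
    (hmass : ∀ k : Fin K,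
      (1 - δ) / (K : ℝ) ≤ ∫ y in Set.Ioc (q k.castSucc) (q k.succ), f y) :
    (⋃ k ∈ {k : Fin K | q k.succ - q k.castSucc ≤ t},
        Set.Ioc (q k.castSucc) (q k.succ))
      ⊆ {y : ℝ | (1 - δ) / ((K : ℝ) * t) - L * t / 2 ≤ f y} := by
  have hL : 0 ≤ L := by simpa using (abs_nonneg _).trans (hf 1 0)
  have hcont : Continuous f :=
    (LipschitzWith.of_dist_le' fun u v => by simpa only [Real.dist_eq] using hf u v).continuous
  simp only [subset_def, mem_iUnion, mem_ofPred_eq]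
  rintro y ⟨k, hlen, hya, hyb⟩
  have hint := setIntegral_Ioc_le_of_le_add_mul_abs ⟨hya.le, hyb⟩ hL hcont.integrableOn_Ioc
    fun z _ => by linarith [(abs_le.1 (hf z y)).2]
  rw [← div_div]
  exact div_sub_mul_le_of_le_mul_add (div_nonneg (by linarith [hδ.2]) K.cast_nonneg) hL
    (by linarith) hlen ((hmass k).trans hint)

/-- **Prediction set theorem (for a fixed feature value).** Let `f` be Lipschitz
with constant `L ≥ 0` (the conditional density), let `q 0 ≤ q 1 ≤ … ≤ q K` be
estimated quantiles defining interquantile intervals `I k = (q (k−1), q k]`, each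
carrying mass at least `(1 − δ)/K`. Then the union of the intervals of length at
most `t` (the CTI prediction set) is contained in the super-level set
`{y : f y ≥ (1 − δ)/(K t) − L t / 2}`. -/
theorem cti_prediction_set_subset (f : ℝ → ℝ) (L : ℝ) (hL : 0 ≤ L)
    (hf : ∀ u v : ℝ, |f u - f v| ≤ L * |u - v|)
    (K : ℕ) (hK : 1 ≤ K) (δ : ℝ) (hδ : δ ∈ Set.Icc (0 : ℝ) 1) (t : ℝ) (ht : 0 < t)
    (q : Fin (K + 1) → ℝ) (hq : Monotone q)
    (hmass : ∀ k : Fin K,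
      (1 - δ) / (K : ℝ) ≤ ∫ y in Set.Ioc (q k.castSucc) (q k.succ), f y) :
    (⋃ k ∈ {k : Fin K | q k.succ - q k.castSucc ≤ t},
        Set.Ioc (q k.castSucc) (q k.succ))
      ⊆ {y : ℝ | (1 - δ) / ((K : ℝ) * t) - L * t / 2 ≤ f y} :=
  cti_prediction_set_subset_general f L hf K δ hδ t q hmass
end
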